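/- Let R be a Rota-Baxter operator on a pre-Lie algebra (g, ·), i.e., R(x)·R(y) = R(R(x)·y + x·R(y)). A linear map Ω: g → g satisfies the two conditions Ω(x·y) = L_x Ω(y) + R_y Ω(x) (with L,R left and right multiplication) and Ω(x) ·^R Ω(y) = Ω(𝔏^R_{Ω(x)} y + ℜ^R_{Ω(y)} x) if and only if both Ω and Ω∘R∘Ω are derivations of (g, ·). -/
import Mathlib


def PreLieFn {g : Type*} [AddCommGroup g] (m : g → g → g) : Prop :=
  ∀ x y z : g, m (m x y) z - m x (m y z) = m (m y x) z - m y (m x z)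

def BimodFn {g V : Type*} [AddCommGroup g] [AddCommGroup V]
    (m : g → g → g) (L R : g → V → V) : Prop :=
  (∀ (x y : g) (u : V), L x (L y u) - L (m x y) u = L y (L x u) - L (m y x) u) ∧
  (∀ (x y : g) (u : V), L x (R y u) - R y (L x u) = R (m x y) u - R y (R x u))

def NijFn {g : Type*} [AddCommGroup g] (m : g → g → g) (N : g → g) : Prop :=
  ∀ x y : g, m (N x) (N y) = N (m (N x) y + m x (N y) - N (m x y))

def IsOOp {K g V : Type*} [Field K] [AddCommGroup g] [Module K g]
    [AddCommGroup V] [Module K V]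
    (m : g →ₗ[K] g →ₗ[K] g) (L R : g →ₗ[K] Module.End K V) (T : V →ₗ[K] g) : Prop :=
  ∀ u v : V, m (T u) (T v) = T (L (T u) v + R (T v) u)

/-- for a Rota-Baxter operator Rb on a pre-Lie algebra (g,·),
a linear map Ω satisfies the two strong Maurer-Cartan conditions iff both Ω and
Ω ∘ Rb ∘ Ω are derivations of (g, ·). -/
theorem rota_baxter_strong_MC_iff_derivations {K g : Type*} [Field K]
    [AddCommGroup g] [Module K g]
    (m : g →ₗ[K] g →ₗ[K] g) (hm : PreLieFn (fun x y => m x y))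
    (Rb : Module.End K g)
    (hRb : ∀ x y : g, m (Rb x) (Rb y) = Rb (m (Rb x) y + m x (Rb y)))
    (Ω : Module.End K g) :
    ((∀ x y : g, Ω (m x y) = m x (Ω y) + m (Ω x) y) ∧
     (∀ x y : g,
        (m (Rb (Ω x)) (Ω y) + m (Ω x) (Rb (Ω y))) =
        Ω ((m (Rb (Ω x)) y - Rb (m (Ω x) y)) + (m x (Rb (Ω y)) - Rb (m x (Ω y)))))) ↔
    ((∀ x y : g, Ω (m x y) = m (Ω x) y + m x (Ω y)) ∧
     (∀ x y : g, Ω (Rb (Ω (m x y))) = m (Ω (Rb (Ω x))) y + m x (Ω (Rb (Ω y))))) := by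
  constructor
  · rintro ⟨h1, h2⟩
    have h1' : ∀ x y : g, Ω (m x y) = m (Ω x) y + m x (Ω y) := fun x y => by
      rw [h1]; abel
    refine ⟨h1', fun x y => ?_⟩
    have e := h2 x y
    rw [map_add, map_sub, map_sub, h1', h1'] at e
    have hs : Ω (Rb (Ω (m x y))) = Ω (Rb (m (Ω x) y)) + Ω (Rb (m x (Ω y))) := by
      rw [h1', map_add, map_add]
    rw [hs]
    linear_combination (norm := module) e
  · rintro ⟨h1, h2⟩
    have h1' : ∀ x y : g, Ω (m x y) = m x (Ω y) + m (Ω x) y := fun x y => by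
      rw [h1]; abel
    refine ⟨h1', fun x y => ?_⟩
    have e := h2 x y
    have hs : Ω (Rb (Ω (m x y))) = Ω (Rb (m (Ω x) y)) + Ω (Rb (m x (Ω y))) := by
      rw [h1, map_add, map_add]
    rw [hs] at e
    rw [map_add, map_sub, map_sub, h1, h1]
    linear_combination (norm := module) e
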